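/- There exists an additive mapping T : M₂(ℤ₂) → M₂(ℤ₂) (namely T([[x, y], [z, t]]) = (x + y + z + t)·I, where I is the identity matrix) satisfying 2T(X²) = T(X)X + XT(X) for all X ∈ M₂(ℤ₂), but which is not a left centralizer: T(e₁₁e₁₂) ≠ T(e₁₁)e₁₂, where e_ij denotes the matrix unit with 1 in position (i, j) and 0 elsewhere. -/

import Mathlib

theorem counterexample_vukman_identity_char_two :
    ∃ T : Matrix (Fin 2) (Fin 2) (ZMod 2) → Matrix (Fin 2) (Fin 2) (ZMod 2),
      (T = fun X => (X 0 0 + X 0 1 + X 1 0 + X 1 1) • (1 : Matrix (Fin 2) (Fin 2) (ZMod 2))) ∧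
      (∀ x y, T (x + y) = T x + T y) ∧
      (∀ X, 2 • T (X ^ 2) = T X * X + X * T X) ∧
      T (Matrix.single 0 0 1 * Matrix.single 0 1 1) ≠
        T (Matrix.single 0 0 1) * Matrix.single 0 1 1 := by
  refine ⟨_, rfl, ?_, ?_, ?_⟩
  · intro x y
    simp only [Matrix.add_apply]
    module
  · intro X
    rw [Matrix.smul_mul, Matrix.mul_smul, Matrix.one_mul, Matrix.mul_one,
      ← add_smul, CharTwo.add_self_eq_zero, zero_smul, two_smul,
      ← add_smul, CharTwo.add_self_eq_zero, zero_smul]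
  · intro h
    have := congrFun (congrFun h 1) 1
    simp [Matrix.mul_apply, Matrix.single, Fin.sum_univ_two] at this
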